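/- Let ι be a finite nonempty index set, p : ι → ℝ a probability vector, E : ι → ℝ, and i₀ ∈ ι with E(i₀) = min_i E(i) and p(i₀) > 0. Fix α with 0 < α ≤ p(i₀). For γ < 0 define f(γ) = (1/γ)·log(Σ_i p_i·exp(γ·E_i)) + (1/γ)·log(1/α). Then E(i₀) is the least upper bound of the set {f(γ) : γ < 0}; that is, f(γ) ≤ E(i₀) for all γ < 0, f(γ) → E(i₀) as γ → −∞, and sup_{γ<0} f(γ) = E(i₀). -/

import Mathlib

open Finset Filter

/-- **Tightness of the entropic CVaR bound.** For a probability vector `p`, energies `E`, a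
minimizer `i₀` with `p i₀ > 0`, and a level `0 < α ≤ p i₀`, the entropic bound
`f(γ) = (1/γ)·log (Σ p i · exp (γ E i)) + (1/γ)·log (1/α)` satisfies `f(γ) ≤ E i₀` for all
`γ < 0`, tends to `E i₀` as `γ → −∞`, and has `E i₀` as least upper bound over `γ < 0`. -/
theorem entropic_cvar_bound_tight
    {ι : Type*} [Fintype ι] [Nonempty ι]
    (p : ι → ℝ) (hp : ∀ i, 0 ≤ p i) (hp1 : ∑ i, p i = 1)
    (E : ι → ℝ) (i₀ : ι) (hmin : ∀ i, E i₀ ≤ E i) (hpos : 0 < p i₀)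
    (α : ℝ) (hα0 : 0 < α) (hα : α ≤ p i₀) :
    (∀ γ : ℝ, γ < 0 →
        (1 / γ) * Real.log (∑ i, p i * Real.exp (γ * E i)) + (1 / γ) * Real.log (1 / α)
          ≤ E i₀) ∧
    Tendsto (fun γ : ℝ =>
        (1 / γ) * Real.log (∑ i, p i * Real.exp (γ * E i)) + (1 / γ) * Real.log (1 / α))
      atBot (nhds (E i₀)) ∧
    IsLUB {y : ℝ | ∃ γ : ℝ, γ < 0 ∧
        y = (1 / γ) * Real.log (∑ i, p i * Real.exp (γ * E i)) + (1 / γ) * Real.log (1 / α)}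
      (E i₀) := by
  set S : ℝ → ℝ := fun γ => ∑ i, p i * Real.exp (γ * E i) with hS
  have hS_lb : ∀ γ : ℝ, α * Real.exp (γ * E i₀) ≤ S γ := by
    intro γ
    have h1 : α * Real.exp (γ * E i₀) ≤ p i₀ * Real.exp (γ * E i₀) :=
      mul_le_mul_of_nonneg_right hα (Real.exp_pos _).le
    exact h1.trans (Finset.single_le_sum (f := fun i => p i * Real.exp (γ * E i))
      (fun i _ => mul_nonneg (hp i) (Real.exp_pos _).le) (Finset.mem_univ i₀))
  have hS_pos : ∀ γ : ℝ, 0 < S γ := fun γ =>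
    lt_of_lt_of_le (mul_pos hα0 (Real.exp_pos _)) (hS_lb γ)
  have hS_ub : ∀ γ : ℝ, γ < 0 → S γ ≤ Real.exp (γ * E i₀) := by
    intro γ hγ
    have : S γ ≤ ∑ i, p i * Real.exp (γ * E i₀) := by
      apply Finset.sum_le_sum
      intro i _
      exact mul_le_mul_of_nonneg_left
        (Real.exp_le_exp.mpr (mul_le_mul_of_nonpos_left (hmin i) hγ.le)) (hp i)
    calc S γ ≤ ∑ i, p i * Real.exp (γ * E i₀) := this
      _ = (∑ i, p i) * Real.exp (γ * E i₀) := by rw [Finset.sum_mul]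
      _ = Real.exp (γ * E i₀) := by rw [hp1, one_mul]
  have hub : ∀ γ : ℝ, γ < 0 →
      (1 / γ) * Real.log (S γ) + (1 / γ) * Real.log (1 / α) ≤ E i₀ := by
    intro γ hγ
    have hlog : Real.log α + γ * E i₀ ≤ Real.log (S γ) := by
      have := Real.log_le_log (mul_pos hα0 (Real.exp_pos _)) (hS_lb γ)
      rwa [Real.log_mul (ne_of_gt hα0) (Real.exp_ne_zero _), Real.log_exp] at this
    have h1γ : (1 : ℝ) / γ ≤ 0 := (one_div_neg.mpr hγ).le
    have hmul := mul_le_mul_of_nonpos_left hlog h1γ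
    have heq : (1 / γ) * (Real.log α + γ * E i₀) + (1 / γ) * Real.log (1 / α) = E i₀ := by
      rw [one_div α, Real.log_inv]
      field_simp
      rw [show Real.log α + γ * E i₀ + -Real.log α = γ * E i₀ by ring]
      exact mul_div_cancel_left₀ _ hγ.ne
    linarith [add_le_add_right hmul ((1 / γ) * Real.log (1 / α))]
  have hlb : ∀ γ : ℝ, γ < 0 →
      E i₀ + (1 / γ) * Real.log (1 / α) ≤
        (1 / γ) * Real.log (S γ) + (1 / γ) * Real.log (1 / α) := by
    intro γ hγ
    have hlog : Real.log (S γ) ≤ γ * E i₀ := by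
      have := Real.log_le_log (hS_pos γ) (hS_ub γ hγ)
      rwa [Real.log_exp] at this
    have h1γ : (1 : ℝ) / γ ≤ 0 := (one_div_neg.mpr hγ).le
    have hmul := mul_le_mul_of_nonpos_left hlog h1γ
    have heq : (1 / γ) * (γ * E i₀) = E i₀ := by
      field_simp
      exact mul_div_cancel_left₀ _ hγ.ne
    linarith
  have htend : Tendsto (fun γ : ℝ =>
      (1 / γ) * Real.log (S γ) + (1 / γ) * Real.log (1 / α)) atBot (nhds (E i₀)) := by
    have hg : Tendsto (fun γ : ℝ => E i₀ + (1 / γ) * Real.log (1 / α)) atBot (nhds (E i₀)) := by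
      have h0 : Tendsto (fun γ : ℝ => (1 / γ) * Real.log (1 / α)) atBot (nhds 0) := by
        have hi : Tendsto (fun γ : ℝ => γ⁻¹) atBot (nhds 0) := by
          have h2 := ((tendsto_inv_atTop_zero (𝕜 := ℝ)).comp tendsto_neg_atBot_atTop).neg
          simpa [Function.comp, inv_neg] using h2
        simpa [one_div] using hi.mul_const (Real.log (1 / α))
      simpa using (tendsto_const_nhds (x := E i₀)).add h0
    refine tendsto_of_tendsto_of_tendsto_of_le_of_le' hg tendsto_const_nhds ?_ ?_
    · filter_upwards [eventually_lt_atBot (0 : ℝ)] with γ hγ using hlb γ hγ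
    · filter_upwards [eventually_lt_atBot (0 : ℝ)] with γ hγ using hub γ hγ
  refine ⟨hub, htend, ?_, ?_⟩
  · rintro y ⟨γ, hγ, rfl⟩
    exact hub γ hγ
  · intro b hb
    refine le_of_tendsto htend ?_
    filter_upwards [eventually_lt_atBot (0 : ℝ)] with γ hγ
    exact hb ⟨γ, hγ, rfl⟩
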